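/- On ℝ^6 with coordinates x^1,...,x^6, the 3-form ω_1 = (1/2)ω + (1/2)√(x²)(dx^{246} - dx^{235} - dx^{145}) + (1/(2√(x²))) dx^{136} on U = {x² > 0}, where ω = dx^{135} - dx^{146} - dx^{236} + x²·dx^{245}, satisfies dω_1 = (1/(4√(x²))) dx^{1245} + (1/(4(√(x²))³)) dx^{1236}; in particular dω_1 vanishes at no point of U. -/

import Mathlib

namespace Stmt12

/-- Exterior derivative of a `k`-form on a vector space. -/
noncomputable def extD {E : Type*} [NormedAddCommGroup E] [NormedSpace ℝ E]
    {k : ℕ} (ω : E → (Fin k → E) → ℝ) : E → (Fin (k + 1) → E) → ℝ :=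
  fun x v => ∑ i : Fin (k + 1), (-1 : ℝ) ^ (i : ℕ) *
    fderiv ℝ (fun y => ω y (v ∘ i.succAbove)) x (v i)

/-- The constant 3-form `dxⁱ ∧ dxʲ ∧ dxᵏ` on `ℝ⁶` (0-indexed). -/
noncomputable def dx3 (i j k : Fin 6) (v : Fin 3 → Fin 6 → ℝ) : ℝ :=
  Matrix.det (Matrix.of fun a b : Fin 3 => v a (![i, j, k] b))

/-- The constant 4-form `dxⁱ ∧ dxʲ ∧ dxᵏ ∧ dxˡ` on `ℝ⁶` (0-indexed). -/
noncomputable def dx4 (i j k l : Fin 6) (v : Fin 4 → Fin 6 → ℝ) : ℝ :=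
  Matrix.det (Matrix.of fun a b : Fin 4 => v a (![i, j, k, l] b))

/-- `ω = dx¹³⁵ - dx¹⁴⁶ - dx²³⁶ + x²·dx²⁴⁵` (coordinates 0-indexed: `x²` is the
coordinate with index 1). -/
noncomputable def omega : (Fin 6 → ℝ) → (Fin 3 → Fin 6 → ℝ) → ℝ :=
  fun x v => dx3 0 2 4 v - dx3 0 3 5 v - dx3 1 2 5 v + x 1 * dx3 1 3 4 v

/-- `ω₁ = ½ω + ½√(x²)(dx²⁴⁶ - dx²³⁵ - dx¹⁴⁵) + (1/(2√(x²)))·dx¹³⁶`. -/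
noncomputable def omega1 : (Fin 6 → ℝ) → (Fin 3 → Fin 6 → ℝ) → ℝ :=
  fun x v => (1 / 2) * omega x v
    + (1 / 2) * Real.sqrt (x 1) * (dx3 1 3 5 v - dx3 1 2 4 v - dx3 0 3 4 v)
    + (1 / (2 * Real.sqrt (x 1))) * dx3 0 2 5 v

theorem det_fin_four' {R : Type*} [CommRing R] (A : Matrix (Fin 4) (Fin 4) R) :
    A.det = A 0 0*A 1 1*A 2 2*A 3 3 - A 0 0*A 1 1*A 2 3*A 3 2 - A 0 0*A 1 2*A 2 1*A 3 3 + A 0 0*A 1 2*A 2 3*A 3 1 + A 0 0*A 1 3*A 2 1*A 3 2 - A 0 0*A 1 3*A 2 2*A 3 1 - A 0 1*A 1 0*A 2 2*A 3 3 + A 0 1*A 1 0*A 2 3*A 3 2 + A 0 1*A 1 2*A 2 0*A 3 3 - A 0 1*A 1 2*A 2 3*A 3 0 - A 0 1*A 1 3*A 2 0*A 3 2 + A 0 1*A 1 3*A 2 2*A 3 0 + A 0 2*A 1 0*A 2 1*A 3 3 - A 0 2*A 1 0*A 2 3*A 3 1 - A 0 2*A 1 1*A 2 0*A 3 3 + A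 0 2*A 1 1*A 2 3*A 3 0 + A 0 2*A 1 3*A 2 0*A 3 1 - A 0 2*A 1 3*A 2 1*A 3 0 - A 0 3*A 1 0*A 2 1*A 3 2 + A 0 3*A 1 0*A 2 2*A 3 1 + A 0 3*A 1 1*A 2 0*A 3 2 - A 0 3*A 1 1*A 2 2*A 3 0 - A 0 3*A 1 2*A 2 0*A 3 1 + A 0 3*A 1 2*A 2 1*A 3 0 := by
  rw [Matrix.det_succ_row_zero]
  simp [Fin.sum_univ_succ, Matrix.det_fin_three, Matrix.submatrix_apply, Fin.succAbove,
    show (Fin.succ 2 : Fin 4) = 3 from rfl, show ((2:Fin 3).castSucc : Fin 4) = 2 from rfl]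
  ring

noncomputable def hfun (a b c c0 : ℝ) (t : ℝ) : ℝ :=
  (1/2) * (c0 + t * a) + (1/2) * Real.sqrt t * b + (2*Real.sqrt t)⁻¹ * c

theorem hfun_deriv (a b c c0 : ℝ) (t : ℝ) (ht : 0 < t) :
    HasDerivAt (hfun a b c c0)
      ((1/2)*a + (1/(4*Real.sqrt t))*b - (1/(4*t*Real.sqrt t))*c) t := by
  have hsp : 0 < Real.sqrt t := Real.sqrt_pos.2 ht
  have H := (((((hasDerivAt_id t).mul_const a).const_add c0).const_mul (1/2)).add
      (((Real.hasDerivAt_sqrt ht.ne').const_mul (1/2)).mul_const b)).add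
      ((((Real.hasDerivAt_sqrt ht.ne').const_mul 2).inv (by positivity)).mul_const c)
  refine H.congr_deriv ?_
  set s := Real.sqrt t with hsdef
  have ht2 : t = s ^ 2 := (Real.sq_sqrt ht.le).symm
  rw [ht2]
  field_simp
  ring

/-- coefficient of the derivative of `omega1` in direction `e₁`. -/
noncomputable def Dcoef (t : ℝ) (w : Fin 3 → Fin 6 → ℝ) : ℝ :=
  (1/2) * dx3 1 3 4 w + (1/(4*Real.sqrt t)) * (dx3 1 3 5 w - dx3 1 2 4 w - dx3 0 3 4 w)
    - (1/(4*t*Real.sqrt t)) * dx3 0 2 5 w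

theorem omega1_fderiv (x : Fin 6 → ℝ) (hx : 0 < x 1) (w : Fin 3 → Fin 6 → ℝ) (u : Fin 6 → ℝ) :
    fderiv ℝ (fun y => omega1 y w) x u = Dcoef (x 1) w * u 1 := by
  have hcomp : (fun y : Fin 6 → ℝ => omega1 y w) =
      (hfun (dx3 1 3 4 w) (dx3 1 3 5 w - dx3 1 2 4 w - dx3 0 3 4 w) (dx3 0 2 5 w)
        (dx3 0 2 4 w - dx3 0 3 5 w - dx3 1 2 5 w)) ∘
      (ContinuousLinearMap.proj 1 : (Fin 6 → ℝ) →L[ℝ] ℝ) := by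
    funext y
    simp [omega1, omega, hfun, one_div, mul_add]
  have hF : HasFDerivAt (fun y : Fin 6 → ℝ => omega1 y w)
      ((Dcoef (x 1) w) • (ContinuousLinearMap.proj 1 : (Fin 6 → ℝ) →L[ℝ] ℝ)) x := by
    rw [hcomp]
    exact (hfun_deriv _ _ _ _ _ hx).comp_hasFDerivAt x
      ((ContinuousLinearMap.proj 1 : (Fin 6 → ℝ) →L[ℝ] ℝ)).hasFDerivAt
  rw [hF.fderiv]
  simp [mul_comm]

set_option maxHeartbeats 2000000 in
theorem main1 (x : Fin 6 → ℝ) (hx : 0 < x 1) (v : Fin 4 → Fin 6 → ℝ) :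
      extD omega1 x v =
        (1 / (4 * Real.sqrt (x 1))) * dx4 0 1 3 4 v
          + (1 / (4 * (Real.sqrt (x 1)) ^ 3)) * dx4 0 1 2 5 v := by
  have hsp : 0 < Real.sqrt (x 1) := Real.sqrt_pos.2 hx
  have e0 : v ∘ (0:Fin 4).succAbove = ![v 1, v 2, v 3] := by
    funext a; fin_cases a <;> rfl
  have e1 : v ∘ (1:Fin 4).succAbove = ![v 0, v 2, v 3] := by
    funext a; fin_cases a <;> rfl
  have e2 : v ∘ (2:Fin 4).succAbove = ![v 0, v 1, v 3] := by
    funext a; fin_cases a <;> rfl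
  have e3 : v ∘ (3:Fin 4).succAbove = ![v 0, v 1, v 2] := by
    funext a; fin_cases a <;> rfl
  rw [show extD omega1 x v = ∑ i : Fin 4, (-1:ℝ)^(i:ℕ) *
      fderiv ℝ (fun y => omega1 y (v ∘ i.succAbove)) x (v i) from rfl, Fin.sum_univ_four]
  rw [e0, e1, e2, e3]
  rw [omega1_fderiv x hx, omega1_fderiv x hx, omega1_fderiv x hx, omega1_fderiv x hx]
  simp only [Dcoef, dx3, dx4, Matrix.det_fin_three, det_fin_four',
    Matrix.of_apply, Matrix.cons_val', Matrix.cons_val_zero, Matrix.cons_val_one,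
    Matrix.head_cons, Matrix.cons_val_two, Matrix.tail_cons, Matrix.cons_val_three,
    Matrix.empty_val', Matrix.cons_val_fin_one, Matrix.head_fin_const,
    Fin.val_zero, Fin.val_one, Fin.val_two, pow_zero, pow_one, one_mul, neg_mul,
    show ((3:Fin 4):ℕ) = 3 from rfl]
  set s := Real.sqrt (x 1) with hs
  rw [show x 1 = s^2 from (Real.sq_sqrt hx.le).symm]
  field_simp
  ring

/-- on `U = {x² > 0} ⊆ ℝ⁶` one has
`dω₁ = (1/(4√(x²)))·dx¹²⁴⁵ + (1/(4√(x²)³))·dx¹²³⁶`;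
in particular `dω₁` vanishes at no point of `U`. -/
theorem stmt12 :
    (∀ x : Fin 6 → ℝ, 0 < x 1 → ∀ v : Fin 4 → Fin 6 → ℝ,
      extD omega1 x v =
        (1 / (4 * Real.sqrt (x 1))) * dx4 0 1 3 4 v
          + (1 / (4 * (Real.sqrt (x 1)) ^ 3)) * dx4 0 1 2 5 v)
    ∧
    (∀ x : Fin 6 → ℝ, 0 < x 1 → ∃ v : Fin 4 → Fin 6 → ℝ, extD omega1 x v ≠ 0) := by
  refine ⟨main1, fun x hx => ?_⟩
  have hsp : 0 < Real.sqrt (x 1) := Real.sqrt_pos.2 hx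
  refine ⟨![fun j => if j = 0 then 1 else 0, fun j => if j = 1 then 1 else 0,
    fun j => if j = 3 then 1 else 0, fun j => if j = 4 then 1 else 0], ?_⟩
  rw [main1 x hx]
  have h1 : dx4 0 1 3 4 ![fun j => if j = 0 then 1 else 0, fun j => if j = 1 then 1 else 0,
      fun j => if j = 3 then 1 else 0, fun j => if j = 4 then 1 else 0] = 1 := by
    simp [dx4, det_fin_four', Matrix.of_apply]
  have h2 : dx4 0 1 2 5 ![fun j => if j = 0 then 1 else 0, fun j => if j = 1 then 1 else 0,
      fun j => if j = 3 then 1 else 0, fun j => if j = 4 then 1 else 0] = 0 := by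
    simp [dx4, det_fin_four', Matrix.of_apply]
  rw [h1, h2]
  positivity

end Stmt12
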